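/- Let r be an odd positive integer. Then there exist infinitely many positive integers k such that C(k, r) is a Sierpiński number, i.e., C(k, r) is odd and C(k, r) · 2^n + 1 is composite for every positive integer n. -/

import Mathlib

open Nat

private lemma descFactorial_modEq {N : ℕ} : ∀ (j k k' : ℕ), j ≤ k → j ≤ k' → k ≡ k' [MOD N] →
    k.descFactorial j ≡ k'.descFactorial j [MOD N] := by
  intro j
  induction j with
  | zero => intro k k' _ _ _; rfl
  | succ j ih =>
    intro k k' hk hk' h
    rw [Nat.descFactorial_succ, Nat.descFactorial_succ]
    have hsub : k - j ≡ k' - j [MOD N] := by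
      apply Nat.ModEq.add_right_cancel' j
      rwa [Nat.sub_add_cancel (by omega), Nat.sub_add_cancel (by omega)]
    exact hsub.mul (ih k k' (by omega) (by omega) h)

private lemma choose_modEq_choose {p : ℕ} (hp : p.Prime) (r c k k' : ℕ) (hk : r ≤ k)
    (hk' : r ≤ k') (h : k ≡ k' [MOD p ^ ((r !).factorization p + c)]) :
    k.choose r ≡ k'.choose r [MOD p ^ c] := by
  have hfac : r ! ≠ 0 := (Nat.factorial_pos r).ne'
  set w : ℕ := (r !).factorization p with hw
  have hdesc : k.descFactorial r ≡ k'.descFactorial r [MOD p ^ (w + c)] :=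
    descFactorial_modEq r k k' hk hk' h
  rw [Nat.descFactorial_eq_factorial_mul_choose, Nat.descFactorial_eq_factorial_mul_choose]
    at hdesc
  have hu : p ^ w * (r ! / p ^ w) = r ! := Nat.ordProj_mul_ordCompl_eq_self (r !) p
  have hnd : ¬ p ∣ (r ! / p ^ w) := Nat.not_dvd_ordCompl hp hfac
  rw [← hu, pow_add, mul_assoc, mul_assoc] at hdesc
  have h1 : (r ! / p ^ w) * k.choose r ≡
      (r ! / p ^ w) * k'.choose r [MOD p ^ c] :=
    Nat.ModEq.mul_left_cancel' (pow_ne_zero _ hp.pos.ne') hdesc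
  exact Nat.ModEq.cancel_left_of_coprime
    (((hp.coprime_iff_not_dvd).mpr hnd).pow_left c) h1

private lemma choose_sub_one_cast {p : ℕ} (hp : p.Prime) :
    ∀ j, j < p → ((Nat.choose (p - 1) j : ZMod p) = (-1) ^ j) := by
  haveI : Fact p.Prime := ⟨hp⟩
  intro j
  induction j with
  | zero => intro _; simp
  | succ j ih =>
    intro hjp
    have hlt : j < p := Nat.lt_of_succ_lt hjp
    have hne : ((j + 1 : ℕ) : ZMod p) ≠ 0 := by
      rw [Ne, ZMod.natCast_eq_zero_iff]
      intro hdvd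
      have := Nat.le_of_dvd (Nat.succ_pos j) hdvd
      omega
    have hid := congrArg (Nat.cast : ℕ → ZMod p) (Nat.choose_succ_right_eq (p - 1) j)
    rw [Nat.cast_mul, Nat.cast_mul] at hid
    have h0 : ((p - 1 - j : ℕ) : ZMod p) + ((j + 1 : ℕ) : ZMod p) = 0 := by
      rw [← Nat.cast_add, (by omega : p - 1 - j + (j + 1) = p), ZMod.natCast_self]
    have hsub : ((p - 1 - j : ℕ) : ZMod p) = -((j + 1 : ℕ) : ZMod p) :=
      eq_neg_of_add_eq_zero_left h0
    rw [ih hlt, hsub] at hid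
    have hfin : ((p - 1).choose (j + 1) : ZMod p) * ((j + 1 : ℕ) : ZMod p) =
        (-1) ^ (j + 1) * ((j + 1 : ℕ) : ZMod p) := by rw [hid]; ring
    exact mul_right_cancel₀ hne hfin

private lemma exists_choose_neg_one :
    ∀ r : ℕ, Odd r → ∃ m : ℕ, r ≤ m ∧ ((Nat.choose m r : ZMod 6700417) = -1) := by
  have hq : Nat.Prime 6700417 := by norm_num
  haveI : Fact (Nat.Prime 6700417) := ⟨hq⟩
  intro r
  induction r using Nat.strong_induction_on with
  | _ r ih =>
    intro hodd
    have hrpos : 0 < r := hodd.pos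
    by_cases hj : Odd (r % 6700417)
    · refine ⟨6700417 * (r / 6700417) + 6700416, by omega, ?_⟩
      have hl := Choose.choose_modEq_choose_mod_mul_choose_div_nat (p := 6700417)
        (n := 6700417 * (r / 6700417) + 6700416) (k := r)
      rw [(by omega : (6700417 * (r / 6700417) + 6700416) % 6700417 = 6700416),
        (by omega : (6700417 * (r / 6700417) + 6700416) / 6700417 = r / 6700417),
        Nat.choose_self, mul_one] at hl
      have hcast := (ZMod.natCast_eq_natCast_iff _ _ _).mpr hl
      rw [hcast]
      have hthis := choose_sub_one_cast hq (r % 6700417) (by omega)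
      rw [(by norm_num : (6700417 - 1 : ℕ) = 6700416)] at hthis
      rw [hthis, hj.neg_one_pow]
    · rw [Nat.not_odd_iff_even] at hj
      have hodd' : Odd (r / 6700417) := by
        have hsum : Odd (6700417 * (r / 6700417) + r % 6700417) := by
          rw [Nat.div_add_mod]; exact hodd
        rw [Nat.odd_add] at hsum
        have hmul : Odd (6700417 * (r / 6700417)) := hsum.mpr hj
        exact (Nat.odd_mul.mp hmul).2
      have hlt : r / 6700417 < r := Nat.div_lt_self hrpos (by norm_num)
      obtain ⟨m', hm'le, hm'⟩ := ih (r / 6700417) hlt hodd'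
      have hle : 6700417 * (r / 6700417) ≤ 6700417 * m' := Nat.mul_le_mul_left _ hm'le
      refine ⟨6700417 * m' + r % 6700417, by omega, ?_⟩
      have hl := Choose.choose_modEq_choose_mod_mul_choose_div_nat (p := 6700417)
        (n := 6700417 * m' + r % 6700417) (k := r)
      rw [(by omega : (6700417 * m' + r % 6700417) % 6700417 = r % 6700417),
        (by omega : (6700417 * m' + r % 6700417) / 6700417 = m'),
        Nat.choose_self, one_mul] at hl
      have hcast := (ZMod.natCast_eq_natCast_iff _ _ _).mpr hl
      rw [hcast, hm']

private lemma pow_cycle {p d : ℕ} (h : (2 : ℕ) ^ d ≡ 1 [MOD p]) (n : ℕ) :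
    (2 : ℕ) ^ n ≡ 2 ^ (n % d) [MOD p] := by
  have h1 : (2:ℕ) ^ n = (2 ^ d) ^ (n / d) * 2 ^ (n % d) := by
    rw [← pow_mul, ← pow_add, Nat.div_add_mod]
  rw [h1]
  have h2 : ((2:ℕ) ^ d) ^ (n / d) ≡ 1 ^ (n / d) [MOD p] := h.pow _
  simpa using h2.mul_right (2 ^ (n % d))

private lemma cover_cases (n : ℕ) : n % 2 = 1 ∨ n % 4 = 2 ∨ n % 8 = 4 ∨ n % 16 = 8 ∨
    n % 32 = 16 ∨ n % 64 = 32 ∨ n % 64 = 0 := by omega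

private lemma big_of_mod (s : ℕ) (h : s % 6700417 = 6700416) (hne : s ≠ 6700416) :
    13400833 ≤ s := by omega

private lemma cover_dvd (s n : ℕ)
    (h3 : s % 3 = 1) (h5 : s % 5 = 1) (h17 : s % 17 = 1) (h257 : s % 257 = 1)
    (h65537 : s % 65537 = 1) (h641 : s % 641 = 1) (hq : s % 6700417 = 6700416) :
    ∃ p, 1 < p ∧ p ≤ 6700417 ∧ p ∣ s * 2 ^ n + 1 := by
  have key : ∀ p d : ℕ, (2 : ℕ) ^ d ≡ 1 [MOD p] → p ∣ (s % p) * 2 ^ (n % d) + 1 →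
      p ∣ s * 2 ^ n + 1 := by
    intro p d hcyc hdvd
    have h1 : s * 2 ^ n + 1 ≡ (s % p) * 2 ^ (n % d) + 1 [MOD p] :=
      Nat.ModEq.add_right 1 (Nat.ModEq.mul (Nat.mod_modEq s p).symm (pow_cycle hcyc n))
    exact (Nat.modEq_zero_iff_dvd).mp (h1.trans ((Nat.modEq_zero_iff_dvd).mpr hdvd))
  rcases cover_cases n with h | h | h | h | h | h | h
  · exact ⟨3, by norm_num, by norm_num, key 3 2 (by decide) (by rw [h3, h]; norm_num)⟩
  · exact ⟨5, by norm_num, by norm_num, key 5 4 (by decide) (by rw [h5, h]; norm_num)⟩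
  · exact ⟨17, by norm_num, by norm_num, key 17 8 (by decide) (by rw [h17, h]; norm_num)⟩
  · exact ⟨257, by norm_num, by norm_num, key 257 16 (by decide) (by rw [h257, h]; norm_num)⟩
  · exact ⟨65537, by norm_num, by norm_num,
      key 65537 32 (by decide) (by rw [h65537, h]; norm_num)⟩
  · refine ⟨641, by norm_num, by norm_num, key 641 64 ?_ (by rw [h641, h]; norm_num)⟩
    show 2 ^ 64 % 641 = 1 % 641
    norm_num
  · refine ⟨6700417, by norm_num, by norm_num, key 6700417 64 ?_ (by rw [hq, h]; norm_num)⟩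
    show 2 ^ 64 % 6700417 = 1 % 6700417
    norm_num

theorem stmt_10 (r : ℕ) (hr : 0 < r) (hodd : Odd r) :
    {k : ℕ | 0 < k ∧ Odd (Nat.choose k r) ∧
      ∀ n : ℕ, 0 < n →
        1 < Nat.choose k r * 2 ^ n + 1 ∧
        ¬ Nat.Prime (Nat.choose k r * 2 ^ n + 1)}.Infinite := by
  have hq : Nat.Prime 6700417 := by norm_num
  have hp2 : Nat.Prime 2 := by norm_num
  have hp3 : Nat.Prime 3 := by norm_num
  have hp5 : Nat.Prime 5 := by norm_num
  have hp17 : Nat.Prime 17 := by norm_num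
  have hp257 : Nat.Prime 257 := by norm_num
  have hp641 : Nat.Prime 641 := by norm_num
  have hp65537 : Nat.Prime 65537 := by norm_num
  obtain ⟨m0, hm0r, hm0⟩ := exists_choose_neg_one r hodd
  set v : ℕ → ℕ := fun p => (r !).factorization p with hv
  set A : ℕ := 2 ^ (v 2 + 1) * (3 ^ (v 3 + 1) * (5 ^ (v 5 + 1) * (17 ^ (v 17 + 1) *
      (257 ^ (v 257 + 1) * (641 ^ (v 641 + 1) * 65537 ^ (v 65537 + 1)))))) with hA
  set B : ℕ := 6700417 ^ (v 6700417 + 1) with hB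
  have hco : Nat.Coprime A B := by
    have cop : ∀ p : ℕ, Nat.Prime p → p ≠ 6700417 → Nat.Coprime (p ^ (v p + 1)) B :=
      fun p hp hne => Nat.Coprime.pow _ _ ((Nat.coprime_primes hp hq).mpr hne)
    exact ((cop 2 hp2 (by norm_num)).mul ((cop 3 hp3 (by norm_num)).mul
      ((cop 5 hp5 (by norm_num)).mul ((cop 17 hp17 (by norm_num)).mul
      ((cop 257 hp257 (by norm_num)).mul ((cop 641 hp641 (by norm_num)).mul
      (cop 65537 hp65537 (by norm_num))))))))
  obtain ⟨c0, hc0A, hc0B⟩ := Nat.chineseRemainder hco r m0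
  have hDpos : 0 < A * B := by positivity
  apply Set.infinite_of_injective_forall_mem
    (f := fun t : ℕ => c0 + A * B * (t + r + 1))
  · intro a b hab
    have hab2 := Nat.add_left_cancel hab
    have := Nat.eq_of_mul_eq_mul_left hDpos hab2
    omega
  · intro t
    set k : ℕ := c0 + A * B * (t + r + 1) with hk
    have hkr : r + 1 ≤ k := by
      have h1 : t + r + 1 ≤ A * B * (t + r + 1) := Nat.le_mul_of_pos_left _ hDpos
      omega
    have hkA : k ≡ r [MOD A] := by
      have h0 : A * B * (t + r + 1) ≡ 0 [MOD A] :=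
        (Nat.modEq_zero_iff_dvd).mpr ⟨B * (t + r + 1), by ring⟩
      calc k ≡ c0 + 0 [MOD A] := Nat.ModEq.add_left c0 h0
        _ = c0 := by omega
        _ ≡ r [MOD A] := hc0A
    have hkB : k ≡ m0 [MOD B] := by
      have h0 : A * B * (t + r + 1) ≡ 0 [MOD B] :=
        (Nat.modEq_zero_iff_dvd).mpr ⟨A * (t + r + 1), by ring⟩
      calc k ≡ c0 + 0 [MOD B] := Nat.ModEq.add_left c0 h0
        _ = c0 := by omega
        _ ≡ m0 [MOD B] := hc0B
    set s : ℕ := Nat.choose k r with hs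
    have key : ∀ p : ℕ, Nat.Prime p → p ^ (v p + 1) ∣ A → s % p = 1 % p := by
      intro p hp hdvd
      have h1 : k ≡ r [MOD p ^ (v p + 1)] := Nat.ModEq.of_dvd hdvd hkA
      have h2 := choose_modEq_choose hp r 1 k r (Nat.le_of_succ_le hkr) le_rfl h1
      rw [Nat.choose_self, pow_one] at h2
      exact h2
    have d2 : (2:ℕ) ^ (v 2 + 1) ∣ A := dvd_mul_right _ _
    have d3 : (3:ℕ) ^ (v 3 + 1) ∣ A := (dvd_mul_right _ _).mul_left _
    have d5 : (5:ℕ) ^ (v 5 + 1) ∣ A := ((dvd_mul_right _ _).mul_left _).mul_left _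
    have d17 : (17:ℕ) ^ (v 17 + 1) ∣ A :=
      (((dvd_mul_right _ _).mul_left _).mul_left _).mul_left _
    have d257 : (257:ℕ) ^ (v 257 + 1) ∣ A :=
      ((((dvd_mul_right _ _).mul_left _).mul_left _).mul_left _).mul_left _
    have d641 : (641:ℕ) ^ (v 641 + 1) ∣ A :=
      (((((dvd_mul_right _ _).mul_left _).mul_left _).mul_left _).mul_left _).mul_left _
    have d65537 : (65537:ℕ) ^ (v 65537 + 1) ∣ A :=
      (((((dvd_mul_left _ _).mul_left _).mul_left _).mul_left _).mul_left _).mul_left _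
    have h2m : s % 2 = 1 := by simpa using key 2 hp2 d2
    have h3m : s % 3 = 1 := by simpa using key 3 hp3 d3
    have h5m : s % 5 = 1 := by simpa using key 5 hp5 d5
    have h17m : s % 17 = 1 := by simpa using key 17 hp17 d17
    have h257m : s % 257 = 1 := by simpa using key 257 hp257 d257
    have h641m : s % 641 = 1 := by simpa using key 641 hp641 d641
    have h65537m : s % 65537 = 1 := by simpa using key 65537 hp65537 d65537
    have hqm : s % 6700417 = 6700416 := by
      have h1 : k ≡ m0 [MOD 6700417 ^ (v 6700417 + 1)] := hkB
      have h2 := choose_modEq_choose hq r 1 k m0 (Nat.le_of_succ_le hkr) hm0r h1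
      rw [pow_one] at h2
      have hcast := (ZMod.natCast_eq_natCast_iff _ _ _).mpr h2
      rw [hm0] at hcast
      have e2 : ((6700416 : ℕ) : ZMod 6700417) = -1 := by
        have e1 : ((6700417 : ℕ) : ZMod 6700417) = 0 := ZMod.natCast_self 6700417
        have e3 : ((6700416 : ℕ) : ZMod 6700417) + 1 = ((6700417 : ℕ) : ZMod 6700417) := by
          rw [← Nat.cast_one, ← Nat.cast_add]
        rw [e1] at e3
        exact eq_neg_of_add_eq_zero_left e3
      rw [← e2] at hcast
      have hfin : s % 6700417 = 6700416 % 6700417 :=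
        (ZMod.natCast_eq_natCast_iff _ _ _).mp hcast
      rwa [Nat.mod_eq_of_lt (show (6700416:ℕ) < 6700417 by norm_num)] at hfin
    have hodds : Odd s := Nat.odd_iff.mpr h2m
    have hsne : s ≠ 6700416 := by
      intro he
      rw [he] at h2m
      norm_num at h2m
    have hsbig : 13400833 ≤ s := big_of_mod s hqm hsne
    refine ⟨Nat.lt_of_lt_of_le (Nat.succ_pos r) hkr, hodds, ?_⟩
    intro n hn
    have hspos : 0 < s := hodds.pos
    have h2n : 2 ≤ 2 ^ n := by
      calc (2:ℕ) = 2 ^ 1 := (pow_one 2).symm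
        _ ≤ 2 ^ n := Nat.pow_le_pow_right (by norm_num) hn
    have hNbig : s * 2 + 1 ≤ s * 2 ^ n + 1 :=
      Nat.add_le_add_right (Nat.mul_le_mul_left s h2n) 1
    constructor
    · exact Nat.succ_lt_succ (Nat.mul_pos hspos (Nat.pow_pos (by norm_num)))
    · obtain ⟨p, hp1, hp2', hpdvd⟩ := cover_dvd s n h3m h5m h17m h257m h65537m h641m hqm
      have hplt : p < s * 2 ^ n + 1 := by
        calc p ≤ 6700417 := hp2'
          _ < 13400833 := by norm_num
          _ ≤ s := hsbig
          _ ≤ s * 2 := Nat.le_mul_of_pos_right s (by norm_num)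
          _ < s * 2 + 1 := Nat.lt_succ_self _
          _ ≤ s * 2 ^ n + 1 := hNbig
      intro hprime
      rcases hprime.eq_one_or_self_of_dvd p hpdvd with h | h
      · exact absurd h hp1.ne'
      · exact absurd h hplt.ne
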